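/- For every ω ∈ ℂ, the general solution of the equation −u''(x) + ω² q(x) u(x) = 0 on (0,a) has the form u(x) = c₁ Σ_{even n ≥ 0} ω^n X̃^(n)(x)/n! + c₂ Σ_{odd n ≥ 1} ω^{n-1} X^(n)(x)/n!, where c₁, c₂ are arbitrary complex constants: both series converge uniformly on [0,a], every such combination satisfies the equation on (0,a), and every twice differentiable solution on (0,a) is of this form. -/

import Mathlib

open MeasureTheory Set Filter

/-- The sequence X̃^(n): X̃^(0) ≡ 1; for n ≥ 1, X̃^(n)(x) = n ∫₀ˣ X̃^(n-1)(ξ) dξ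
if n is even, and X̃^(n)(x) = n ∫₀ˣ X̃^(n-1)(ξ) q(ξ) dξ if n is odd. -/
noncomputable def Xtilde (q : ℝ → ℂ) : ℕ → ℝ → ℂ
  | 0 => fun _ => 1
  | n + 1 => fun x => ((n + 1 : ℕ) : ℂ) *
      ∫ ξ in (0:ℝ)..x, Xtilde q n ξ * (if Even (n + 1) then 1 else q ξ)

/-- The sequence X^(n): X^(0) ≡ 1; for n ≥ 1, X^(n)(x) = n ∫₀ˣ X^(n-1)(ξ) q(ξ) dξ
if n is even, and X^(n)(x) = n ∫₀ˣ X^(n-1)(ξ) dξ if n is odd. -/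
noncomputable def Xup (q : ℝ → ℂ) : ℕ → ℝ → ℂ
  | 0 => fun _ => 1
  | n + 1 => fun x => ((n + 1 : ℕ) : ℂ) *
      ∫ ξ in (0:ℝ)..x, Xup q n ξ * (if Even (n + 1) then q ξ else 1)

/-- u₁ for the equation −u'' + ω² q u = 0: Σ_{even n ≥ 0} ω^n X̃^(n)(x)/n!. -/
noncomputable def U₁ (q : ℝ → ℂ) (ω : ℂ) (x : ℝ) : ℂ :=
  ∑' k : ℕ, ω ^ (2 * k) * Xtilde q (2 * k) x / (Nat.factorial (2 * k) : ℂ)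

/-- u₂ for the equation −u'' + ω² q u = 0: Σ_{odd n ≥ 1} ω^{n-1} X^(n)(x)/n!. -/
noncomputable def U₂ (q : ℝ → ℂ) (ω : ℂ) (x : ℝ) : ℂ :=
  ∑' k : ℕ, ω ^ (2 * k) * Xup q (2 * k + 1) x / (Nat.factorial (2 * k + 1) : ℂ)

namespace SPPS

lemma prim_hasDerivAt {f : ℝ → ℂ} (hf : Continuous f) (c : ℂ) (x : ℝ) :
    HasDerivAt (fun y => c * ∫ ξ in (0:ℝ)..y, f ξ) (c * f x) x :=
  (intervalIntegral.integral_hasDerivAt_right (hf.intervalIntegrable _ _)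
    (hf.stronglyMeasurableAtFilter _ _) hf.continuousAt).const_mul c

variable {w : ℝ → ℂ} {C : ℝ}

lemma wt1_cont (hw : Continuous w) (n : ℕ) :
    Continuous fun ξ => (if Even (n+1) then (1:ℂ) else w ξ) := by
  by_cases h : Even (n+1) <;> simp [h] <;> first | exact hw | exact continuous_const

lemma wt2_cont (hw : Continuous w) (n : ℕ) :
    Continuous fun ξ => (if Even (n+1) then w ξ else (1:ℂ)) := by
  by_cases h : Even (n+1) <;> simp [h] <;> first | exact hw | exact continuous_const

lemma Xtilde_cont (hw : Continuous w) : ∀ n, Continuous (Xtilde w n)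
  | 0 => by simp only [Xtilde]; exact continuous_const
  | n+1 => by
    have hf : Continuous fun ξ => Xtilde w n ξ * (if Even (n+1) then (1:ℂ) else w ξ) :=
      (Xtilde_cont hw n).mul (wt1_cont hw n)
    simp only [Xtilde]
    exact (Differentiable.continuous fun x => (prim_hasDerivAt hf _ x).differentiableAt)

lemma Xup_cont (hw : Continuous w) : ∀ n, Continuous (Xup w n)
  | 0 => by simp only [Xup]; exact continuous_const
  | n+1 => by
    have hf : Continuous fun ξ => Xup w n ξ * (if Even (n+1) then w ξ else (1:ℂ)) :=
      (Xup_cont hw n).mul (wt2_cont hw n)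
    simp only [Xup]
    exact (Differentiable.continuous fun x => (prim_hasDerivAt hf _ x).differentiableAt)

lemma Xtilde_hasDerivAt (hw : Continuous w) (n : ℕ) (x : ℝ) :
    HasDerivAt (Xtilde w (n+1))
      (((n+1 : ℕ) : ℂ) * (Xtilde w n x * (if Even (n+1) then 1 else w x))) x := by
  have hf : Continuous fun ξ => Xtilde w n ξ * (if Even (n+1) then (1:ℂ) else w ξ) :=
    (Xtilde_cont hw n).mul (wt1_cont hw n)
  simpa only [Xtilde] using prim_hasDerivAt hf ((n+1 : ℕ) : ℂ) x

lemma Xup_hasDerivAt (hw : Continuous w) (n : ℕ) (x : ℝ) :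
    HasDerivAt (Xup w (n+1))
      (((n+1 : ℕ) : ℂ) * (Xup w n x * (if Even (n+1) then w x else 1))) x := by
  have hf : Continuous fun ξ => Xup w n ξ * (if Even (n+1) then w ξ else (1:ℂ)) :=
    (Xup_cont hw n).mul (wt2_cont hw n)
  simpa only [Xup] using prim_hasDerivAt hf ((n+1 : ℕ) : ℂ) x

lemma Xtilde_zero (n : ℕ) : Xtilde w (n+1) 0 = 0 := by
  simp [Xtilde]

lemma Xup_zero (n : ℕ) : Xup w (n+1) 0 = 0 := by
  simp [Xup]

end SPPS
namespace SPPS2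
variable {w : ℝ → ℂ} {C : ℝ}

-- generic integral bound step
lemma step_bound {f : ℝ → ℂ} (hf : Continuous f) {D x : ℝ} {n : ℕ} (hx : 0 ≤ x)
    (hD : 0 ≤ D) (hb : ∀ ξ ∈ Icc 0 x, ‖f ξ‖ ≤ D * ξ ^ n) :
    ‖∫ ξ in (0:ℝ)..x, f ξ‖ ≤ D * x ^ (n+1) / (n+1) := by
  have h1 : ‖∫ ξ in (0:ℝ)..x, f ξ‖ ≤ ∫ ξ in (0:ℝ)..x, ‖f ξ‖ :=
    intervalIntegral.norm_integral_le_integral_norm hx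
  have h2 : ∫ ξ in (0:ℝ)..x, ‖f ξ‖ ≤ ∫ ξ in (0:ℝ)..x, D * ξ ^ n := by
    apply intervalIntegral.integral_mono_on hx
      (hf.norm.intervalIntegrable _ _)
      ((continuous_const.mul (continuous_pow n)).intervalIntegrable _ _)
    exact hb
  have h3 : ∫ ξ in (0:ℝ)..x, D * ξ ^ n = D * (x ^ (n+1) / (n+1)) := by
    rw [intervalIntegral.integral_const_mul, integral_pow]
    norm_num
  calc ‖∫ ξ in (0:ℝ)..x, f ξ‖ ≤ ∫ ξ in (0:ℝ)..x, D * ξ ^ n := le_trans h1 h2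
    _ = D * x ^ (n+1) / (n+1) := by rw [h3]; ring

end SPPS2

namespace SPPS3
open SPPS2
variable {w : ℝ → ℂ} {C : ℝ}

lemma Xtilde_bound (hw : Continuous w) (hC : ∀ x, ‖w x‖ ≤ C) (hC1 : 1 ≤ C) :
    ∀ n, ∀ x, 0 ≤ x → ‖Xtilde w n x‖ ≤ (C * x) ^ n := by
  have hC0 : 0 ≤ C := le_trans zero_le_one hC1
  intro n
  induction n with
  | zero => intro x hx; simp [Xtilde]
  | succ n ih =>
    intro x hx
    have hwt : ∀ ξ, ‖(if Even (n+1) then (1:ℂ) else w ξ)‖ ≤ C := by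
      intro ξ; by_cases h : Even (n+1) <;> simp [h]
      · exact hC1
      · exact hC ξ
    have hf : Continuous fun ξ => Xtilde w n ξ * (if Even (n+1) then (1:ℂ) else w ξ) :=
      (SPPS.Xtilde_cont hw n).mul (SPPS.wt1_cont hw n)
    have hb : ∀ ξ ∈ Icc (0:ℝ) x,
        ‖Xtilde w n ξ * (if Even (n+1) then (1:ℂ) else w ξ)‖ ≤ C ^ (n+1) * ξ ^ n := by
      intro ξ hξ
      rw [norm_mul]
      calc ‖Xtilde w n ξ‖ * ‖(if Even (n+1) then (1:ℂ) else w ξ)‖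
          ≤ (C * ξ) ^ n * C := by
            apply mul_le_mul (ih ξ hξ.1) (hwt ξ) (norm_nonneg _)
            exact pow_nonneg (mul_nonneg hC0 hξ.1) n
        _ = C ^ (n+1) * ξ ^ n := by rw [mul_pow]; ring
    have hs := step_bound hf hx (by positivity) hb
    have : ‖Xtilde w (n+1) x‖ = ((n+1 : ℕ) : ℝ) * ‖∫ ξ in (0:ℝ)..x,
        Xtilde w n ξ * (if Even (n+1) then (1:ℂ) else w ξ)‖ := by
      simp only [Xtilde, norm_mul, Complex.norm_natCast]
    rw [this]
    calc ((n+1 : ℕ) : ℝ) * ‖∫ ξ in (0:ℝ)..x, Xtilde w n ξ * (if Even (n+1) then (1:ℂ) else w ξ)‖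
        ≤ ((n+1 : ℕ) : ℝ) * (C ^ (n+1) * x ^ (n+1) / (n+1)) := by
          apply mul_le_mul_of_nonneg_left hs (by positivity)
      _ = (C * x) ^ (n+1) := by
          rw [mul_pow]; field_simp; push_cast; ring

lemma Xup_bound (hw : Continuous w) (hC : ∀ x, ‖w x‖ ≤ C) (hC1 : 1 ≤ C) :
    ∀ n, ∀ x, 0 ≤ x → ‖Xup w n x‖ ≤ (C * x) ^ n := by
  have hC0 : 0 ≤ C := le_trans zero_le_one hC1
  intro n
  induction n with
  | zero => intro x hx; simp [Xup]
  | succ n ih =>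
    intro x hx
    have hwt : ∀ ξ, ‖(if Even (n+1) then w ξ else (1:ℂ))‖ ≤ C := by
      intro ξ; by_cases h : Even (n+1) <;> simp [h]
      · exact hC ξ
      · exact hC1
    have hf : Continuous fun ξ => Xup w n ξ * (if Even (n+1) then w ξ else (1:ℂ)) :=
      (SPPS.Xup_cont hw n).mul (SPPS.wt2_cont hw n)
    have hb : ∀ ξ ∈ Icc (0:ℝ) x,
        ‖Xup w n ξ * (if Even (n+1) then w ξ else (1:ℂ))‖ ≤ C ^ (n+1) * ξ ^ n := by
      intro ξ hξ
      rw [norm_mul]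
      calc ‖Xup w n ξ‖ * ‖(if Even (n+1) then w ξ else (1:ℂ))‖
          ≤ (C * ξ) ^ n * C := by
            apply mul_le_mul (ih ξ hξ.1) (hwt ξ) (norm_nonneg _)
            exact pow_nonneg (mul_nonneg hC0 hξ.1) n
        _ = C ^ (n+1) * ξ ^ n := by rw [mul_pow]; ring
    have hs := step_bound hf hx (by positivity) hb
    have : ‖Xup w (n+1) x‖ = ((n+1 : ℕ) : ℝ) * ‖∫ ξ in (0:ℝ)..x,
        Xup w n ξ * (if Even (n+1) then w ξ else (1:ℂ))‖ := by
      simp only [Xup, norm_mul, Complex.norm_natCast]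
    rw [this]
    calc ((n+1 : ℕ) : ℝ) * ‖∫ ξ in (0:ℝ)..x, Xup w n ξ * (if Even (n+1) then w ξ else (1:ℂ))‖
        ≤ ((n+1 : ℕ) : ℝ) * (C ^ (n+1) * x ^ (n+1) / (n+1)) := by
          apply mul_le_mul_of_nonneg_left hs (by positivity)
      _ = (C * x) ^ (n+1) := by
          rw [mul_pow]; field_simp; push_cast; ring

lemma pow_div_factorial_le {t : ℝ} (ht : 0 ≤ t) (n : ℕ) :
    t ^ n / n.factorial ≤ Real.exp (2*t) / 2 ^ n := by
  have hfac : (0:ℝ) < n.factorial := by exact_mod_cast n.factorial_pos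
  rw [div_le_div_iff₀ hfac (by positivity)]
  have h1 : (2*t) ^ n / n.factorial ≤ Real.exp (2*t) := by
    refine le_trans ?_ (Real.sum_le_exp_of_nonneg (by positivity) (n+1))
    exact Finset.single_le_sum (f := fun i => (2*t) ^ i / i.factorial)
      (fun i _ => by positivity) (Finset.self_mem_range_succ n)
  rw [div_le_iff₀ hfac] at h1
  calc t ^ n * 2 ^ n = (2*t) ^ n := by rw [mul_pow]; ring
    _ ≤ Real.exp (2*t) * n.factorial := h1

end SPPS3
namespace SPPS4
open SPPS SPPS2 SPPS3

noncomputable def t1 (w : ℝ → ℂ) (ω : ℂ) (k : ℕ) (x : ℝ) : ℂ :=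
  ω ^ (2*k) * Xtilde w (2*k) x / ((2*k).factorial : ℂ)

noncomputable def t1d (w : ℝ → ℂ) (ω : ℂ) : ℕ → ℝ → ℂ
  | 0, _ => 0
  | (j+1), x => ω ^ (2*j+2) * Xtilde w (2*j+1) x / ((2*j+1).factorial : ℂ)

noncomputable def t1dd (w : ℝ → ℂ) (ω : ℂ) : ℕ → ℝ → ℂ
  | 0, _ => 0
  | (j+1), x => ω ^ (2*j+2) * Xtilde w (2*j) x * w x / ((2*j).factorial : ℂ)

noncomputable def t2 (w : ℝ → ℂ) (ω : ℂ) (k : ℕ) (x : ℝ) : ℂ :=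
  ω ^ (2*k) * Xup w (2*k+1) x / ((2*k+1).factorial : ℂ)

noncomputable def t2d (w : ℝ → ℂ) (ω : ℂ) (k : ℕ) (x : ℝ) : ℂ :=
  ω ^ (2*k) * Xup w (2*k) x / ((2*k).factorial : ℂ)

noncomputable def t2dd (w : ℝ → ℂ) (ω : ℂ) : ℕ → ℝ → ℂ
  | 0, _ => 0
  | (j+1), x => ω ^ (2*j+2) * Xup w (2*j+1) x * w x / ((2*j+1).factorial : ℂ)

variable {w : ℝ → ℂ} {C : ℝ} {ω : ℂ}

lemma fact_ne (m : ℕ) : ((m.factorial : ℕ) : ℂ) ≠ 0 := by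
  exact_mod_cast m.factorial_ne_zero

lemma aux_div2 {c X m f : ℂ} (hm : m ≠ 0) (hf : f ≠ 0) :
    c * X / f = c / (m * f) * (m * X) := by
  field_simp

lemma aux_div3 {c X Y m f : ℂ} (hm : m ≠ 0) (hf : f ≠ 0) :
    c * X * Y / f = c / (m * f) * (m * (X * Y)) := by
  field_simp

lemma t1_hasDerivAt (hw : Continuous w) (k : ℕ) (x : ℝ) :
    HasDerivAt (fun y => t1 w ω k y) (t1d w ω k x) x := by
  cases k with
  | zero =>
    have h0 : (fun y => t1 w ω 0 y) = fun _ => (1:ℂ) := by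
      funext y; simp [t1, Xtilde]
    rw [h0]
    simpa [t1d] using hasDerivAt_const x (1:ℂ)
  | succ j =>
    have key := Xtilde_hasDerivAt hw (n := 2*j+1) x
    have hev : Even (2*j+1+1) := ⟨j+1, by ring⟩
    rw [if_pos hev, mul_one] at key
    have key2 := key.const_mul (ω ^ (2*j+2) / (((2*j+1+1).factorial : ℕ) : ℂ))
    have h1 : (fun y => t1 w ω (j+1) y)
        = fun y => (ω ^ (2*j+2) / (((2*j+1+1).factorial : ℕ) : ℂ)) * Xtilde w (2*j+1+1) y := by
      funext y
      have : 2*(j+1) = 2*j+1+1 := by ring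
      simp only [t1, this]
      ring
    have h2 : t1d w ω (j+1) x
        = (ω ^ (2*j+2) / (((2*j+1+1).factorial : ℕ) : ℂ))
            * ((((2*j+1+1:ℕ)) : ℂ) * Xtilde w (2*j+1) x) := by
      have hf : (((2*j+1+1).factorial : ℕ) : ℂ)
          = ((2*j+1+1 : ℕ) : ℂ) * (((2*j+1).factorial : ℕ) : ℂ) := by
        rw [Nat.factorial_succ]; push_cast; ring
      have h := fact_ne (2*j+1)
      have h2 : ((2*j+1+1 : ℕ) : ℂ) ≠ 0 := by
        exact_mod_cast Nat.succ_ne_zero (2*j+1)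
      simp only [t1d]
      rw [hf, aux_div2 h2 h]
    rw [h1, h2]
    exact key2

lemma t1d_hasDerivAt (hw : Continuous w) (k : ℕ) (x : ℝ) :
    HasDerivAt (fun y => t1d w ω k y) (t1dd w ω k x) x := by
  cases k with
  | zero =>
    have h0 : (fun y => t1d w ω 0 y) = fun _ => (0:ℂ) := by funext y; simp [t1d]
    rw [h0]
    simpa [t1dd] using hasDerivAt_const x (0:ℂ)
  | succ j =>
    have key := Xtilde_hasDerivAt hw (n := 2*j) x
    have hodd : ¬ Even (2*j+1) := by simp [Nat.even_add_one, parity_simps]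
    rw [if_neg hodd] at key
    have key2 := key.const_mul (ω ^ (2*j+2) / (((2*j+1).factorial : ℕ) : ℂ))
    have h1 : (fun y => t1d w ω (j+1) y)
        = fun y => (ω ^ (2*j+2) / (((2*j+1).factorial : ℕ) : ℂ)) * Xtilde w (2*j+1) y := by
      funext y; simp only [t1d]; ring
    have h2 : t1dd w ω (j+1) x
        = (ω ^ (2*j+2) / (((2*j+1).factorial : ℕ) : ℂ))
            * ((((2*j+1:ℕ)) : ℂ) * (Xtilde w (2*j) x * w x)) := by
      have hf : (((2*j+1).factorial : ℕ) : ℂ)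
          = ((2*j+1 : ℕ) : ℂ) * (((2*j).factorial : ℕ) : ℂ) := by
        rw [Nat.factorial_succ]; push_cast; ring
      have h := fact_ne (2*j)
      have h2 : ((2*j+1 : ℕ) : ℂ) ≠ 0 := by
        exact_mod_cast Nat.succ_ne_zero (2*j)
      simp only [t1dd]
      rw [hf, aux_div3 h2 h]
    rw [h1, h2]
    exact key2

lemma t2_hasDerivAt (hw : Continuous w) (k : ℕ) (x : ℝ) :
    HasDerivAt (fun y => t2 w ω k y) (t2d w ω k x) x := by
  have key := Xup_hasDerivAt hw (n := 2*k) x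
  have hodd : ¬ Even (2*k+1) := by simp [Nat.even_add_one, parity_simps]
  rw [if_neg hodd, mul_one] at key
  have key2 := key.const_mul (ω ^ (2*k) / (((2*k+1).factorial : ℕ) : ℂ))
  have h1 : (fun y => t2 w ω k y)
      = fun y => (ω ^ (2*k) / (((2*k+1).factorial : ℕ) : ℂ)) * Xup w (2*k+1) y := by
    funext y; simp only [t2]; ring
  have h2 : t2d w ω k x
      = (ω ^ (2*k) / (((2*k+1).factorial : ℕ) : ℂ)) * ((((2*k+1:ℕ)) : ℂ) * Xup w (2*k) x) := by
    have hf : (((2*k+1).factorial : ℕ) : ℂ)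
        = ((2*k+1 : ℕ) : ℂ) * (((2*k).factorial : ℕ) : ℂ) := by
      rw [Nat.factorial_succ]; push_cast; ring
    have h := fact_ne (2*k)
    have h2 : ((2*k+1 : ℕ) : ℂ) ≠ 0 := by
      exact_mod_cast Nat.succ_ne_zero (2*k)
    simp only [t2d]
    rw [hf, aux_div2 h2 h]
  rw [h1, h2]
  exact key2

lemma t2d_hasDerivAt (hw : Continuous w) (k : ℕ) (x : ℝ) :
    HasDerivAt (fun y => t2d w ω k y) (t2dd w ω k x) x := by
  cases k with
  | zero =>
    have h0 : (fun y => t2d w ω 0 y) = fun _ => (1:ℂ) := by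
      funext y; simp [t2d, Xup]
    rw [h0]
    simpa [t2dd] using hasDerivAt_const x (1:ℂ)
  | succ j =>
    have key := Xup_hasDerivAt hw (n := 2*j+1) x
    have hev : Even (2*j+1+1) := ⟨j+1, by ring⟩
    rw [if_pos hev] at key
    have key2 := key.const_mul (ω ^ (2*j+2) / (((2*j+1+1).factorial : ℕ) : ℂ))
    have h1 : (fun y => t2d w ω (j+1) y)
        = fun y => (ω ^ (2*j+2) / (((2*j+1+1).factorial : ℕ) : ℂ)) * Xup w (2*j+1+1) y := by
      funext y
      have : 2*(j+1) = 2*j+1+1 := by ring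
      simp only [t2d, this]
      ring
    have h2 : t2dd w ω (j+1) x
        = (ω ^ (2*j+2) / (((2*j+1+1).factorial : ℕ) : ℂ))
            * ((((2*j+1+1:ℕ)) : ℂ) * (Xup w (2*j+1) x * w x)) := by
      have hf : (((2*j+1+1).factorial : ℕ) : ℂ)
          = ((2*j+1+1 : ℕ) : ℂ) * (((2*j+1).factorial : ℕ) : ℂ) := by
        rw [Nat.factorial_succ]; push_cast; ring
      have h := fact_ne (2*j+1)
      have h2 : ((2*j+1+1 : ℕ) : ℂ) ≠ 0 := by
        exact_mod_cast Nat.succ_ne_zero (2*j+1)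
      simp only [t2dd]
      rw [hf, aux_div3 h2 h]
    rw [h1, h2]
    exact key2

end SPPS4
namespace SPPS5
open SPPS SPPS2 SPPS3 SPPS4

noncomputable def V1 (w : ℝ → ℂ) (ω : ℂ) (x : ℝ) : ℂ := ∑' k : ℕ, t1d w ω k x
noncomputable def V2 (w : ℝ → ℂ) (ω : ℂ) (x : ℝ) : ℂ := ∑' k : ℕ, t2d w ω k x

variable {w : ℝ → ℂ} {C : ℝ} {ω : ℂ} {a : ℝ}

lemma geo_sum (D : ℝ) : Summable fun k : ℕ => D * (1/4:ℝ)^k :=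
  (summable_geometric_of_lt_one (by norm_num) (by norm_num)).mul_left D

lemma two_pow_eq (k : ℕ) : ((2:ℝ)^(2*k))⁻¹ = (1/4:ℝ)^k := by
  rw [pow_mul, one_div, inv_pow]; norm_num

-- individual bounds on Icc 0 a
lemma bt1 (hw : Continuous w) (hC : ∀ x, ‖w x‖ ≤ C) (hC1 : 1 ≤ C) (ha : 0 < a)
    (k : ℕ) {x : ℝ} (hx : x ∈ Set.Icc 0 a) :
    ‖t1 w ω k x‖ ≤ Real.exp (2*(‖ω‖*(C*a))) * (1/4:ℝ)^k := by
  have hC0 : (0:ℝ) ≤ C := le_trans zero_le_one hC1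
  have hb := Xtilde_bound hw hC hC1 (2*k) x hx.1
  have h1 : ‖t1 w ω k x‖ = ‖ω‖^(2*k) * ‖Xtilde w (2*k) x‖ / (((2*k).factorial : ℕ) : ℝ) := by
    simp [t1, norm_div, norm_mul, norm_pow]
  rw [h1]
  have h2 : ‖ω‖^(2*k) * ‖Xtilde w (2*k) x‖ ≤ (‖ω‖*(C*a))^(2*k) := by
    rw [mul_pow]
    apply mul_le_mul_of_nonneg_left _ (by positivity)
    refine le_trans hb (pow_le_pow_left₀ (mul_nonneg hC0 hx.1) ?_ _)
    nlinarith [hx.2]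
  have h3 : (‖ω‖*(C*a))^(2*k) / (((2*k).factorial : ℕ) : ℝ)
      ≤ Real.exp (2*(‖ω‖*(C*a))) / 2^(2*k) :=
    pow_div_factorial_le (by positivity) (2*k)
  have hfac : (0:ℝ) < (((2*k).factorial : ℕ) : ℝ) := by exact_mod_cast (2*k).factorial_pos
  calc ‖ω‖^(2*k) * ‖Xtilde w (2*k) x‖ / (((2*k).factorial : ℕ) : ℝ)
      ≤ (‖ω‖*(C*a))^(2*k) / (((2*k).factorial : ℕ) : ℝ) := by
        gcongr
    _ ≤ Real.exp (2*(‖ω‖*(C*a))) / 2^(2*k) := h3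
    _ = Real.exp (2*(‖ω‖*(C*a))) * (1/4:ℝ)^k := by
        rw [div_eq_mul_inv, two_pow_eq]

end SPPS5

namespace SPPS5B
open SPPS SPPS2 SPPS3 SPPS4 SPPS5
variable {w : ℝ → ℂ} {C : ℝ} {ω : ℂ} {a : ℝ}

lemma bt2 (hw : Continuous w) (hC : ∀ x, ‖w x‖ ≤ C) (hC1 : 1 ≤ C) (ha : 0 < a)
    (k : ℕ) {x : ℝ} (hx : x ∈ Set.Icc 0 a) :
    ‖t2 w ω k x‖ ≤ ((C*a) * Real.exp (2*(‖ω‖*(C*a)))) * (1/4:ℝ)^k := by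
  have hC0 : (0:ℝ) ≤ C := le_trans zero_le_one hC1
  have hb := Xup_bound hw hC hC1 (2*k+1) x hx.1
  have h1 : ‖t2 w ω k x‖ = ‖ω‖^(2*k) * ‖Xup w (2*k+1) x‖ / (((2*k+1).factorial : ℕ) : ℝ) := by
    simp [t2, norm_div, norm_mul, norm_pow]
  rw [h1]
  have hff : (((2*k).factorial : ℕ) : ℝ) ≤ (((2*k+1).factorial : ℕ) : ℝ) := by
    exact_mod_cast Nat.factorial_le (by omega)
  have hfac : (0:ℝ) < (((2*k).factorial : ℕ) : ℝ) := by exact_mod_cast (2*k).factorial_pos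
  have h2 : ‖ω‖^(2*k) * ‖Xup w (2*k+1) x‖ ≤ (C*a) * (‖ω‖*(C*a))^(2*k) := by
    have hXb : ‖Xup w (2*k+1) x‖ ≤ (C*a)^(2*k+1) := by
      refine le_trans hb (pow_le_pow_left₀ (mul_nonneg hC0 hx.1) ?_ _)
      nlinarith [hx.2]
    calc ‖ω‖^(2*k) * ‖Xup w (2*k+1) x‖ ≤ ‖ω‖^(2*k) * (C*a)^(2*k+1) := by
          apply mul_le_mul_of_nonneg_left hXb (by positivity)
      _ = (C*a) * (‖ω‖*(C*a))^(2*k) := by rw [mul_pow, pow_succ]; ring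
  calc ‖ω‖^(2*k) * ‖Xup w (2*k+1) x‖ / (((2*k+1).factorial : ℕ) : ℝ)
      ≤ ‖ω‖^(2*k) * ‖Xup w (2*k+1) x‖ / (((2*k).factorial : ℕ) : ℝ) := by
        gcongr
    _ ≤ ((C*a) * (‖ω‖*(C*a))^(2*k)) / (((2*k).factorial : ℕ) : ℝ) := by gcongr
    _ = (C*a) * ((‖ω‖*(C*a))^(2*k) / (((2*k).factorial : ℕ) : ℝ)) := by ring
    _ ≤ (C*a) * (Real.exp (2*(‖ω‖*(C*a))) / 2^(2*k)) := by
        have := pow_div_factorial_le (t := ‖ω‖*(C*a)) (by positivity) (2*k)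
        gcongr
    _ = ((C*a) * Real.exp (2*(‖ω‖*(C*a)))) * (1/4:ℝ)^k := by
        rw [div_eq_mul_inv, two_pow_eq]; ring

lemma bt2d (hw : Continuous w) (hC : ∀ x, ‖w x‖ ≤ C) (hC1 : 1 ≤ C) (ha : 0 < a)
    (k : ℕ) {x : ℝ} (hx : x ∈ Set.Icc 0 a) :
    ‖t2d w ω k x‖ ≤ Real.exp (2*(‖ω‖*(C*a))) * (1/4:ℝ)^k := by
  have hC0 : (0:ℝ) ≤ C := le_trans zero_le_one hC1
  have hb := Xup_bound hw hC hC1 (2*k) x hx.1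
  have h1 : ‖t2d w ω k x‖ = ‖ω‖^(2*k) * ‖Xup w (2*k) x‖ / (((2*k).factorial : ℕ) : ℝ) := by
    simp [t2d, norm_div, norm_mul, norm_pow]
  rw [h1]
  have h2 : ‖ω‖^(2*k) * ‖Xup w (2*k) x‖ ≤ (‖ω‖*(C*a))^(2*k) := by
    rw [mul_pow]
    apply mul_le_mul_of_nonneg_left _ (by positivity)
    refine le_trans hb (pow_le_pow_left₀ (mul_nonneg hC0 hx.1) ?_ _)
    nlinarith [hx.2]
  calc ‖ω‖^(2*k) * ‖Xup w (2*k) x‖ / (((2*k).factorial : ℕ) : ℝ)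
      ≤ (‖ω‖*(C*a))^(2*k) / (((2*k).factorial : ℕ) : ℝ) := by gcongr
    _ ≤ Real.exp (2*(‖ω‖*(C*a))) / 2^(2*k) := pow_div_factorial_le (by positivity) (2*k)
    _ = Real.exp (2*(‖ω‖*(C*a))) * (1/4:ℝ)^k := by rw [div_eq_mul_inv, two_pow_eq]

lemma bt1d (hw : Continuous w) (hC : ∀ x, ‖w x‖ ≤ C) (hC1 : 1 ≤ C) (ha : 0 < a)
    (k : ℕ) {x : ℝ} (hx : x ∈ Set.Icc 0 a) :
    ‖t1d w ω k x‖ ≤ (2*‖ω‖*Real.exp (2*(‖ω‖*(C*a)))) * (1/4:ℝ)^k := by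
  have hC0 : (0:ℝ) ≤ C := le_trans zero_le_one hC1
  cases k with
  | zero => simp [t1d]; positivity
  | succ j =>
    have hb := Xtilde_bound hw hC hC1 (2*j+1) x hx.1
    have h1 : ‖t1d w ω (j+1) x‖
        = ‖ω‖^(2*j+2) * ‖Xtilde w (2*j+1) x‖ / (((2*j+1).factorial : ℕ) : ℝ) := by
      simp [t1d, norm_div, norm_mul, norm_pow]
    rw [h1]
    have h2 : ‖ω‖^(2*j+2) * ‖Xtilde w (2*j+1) x‖ ≤ ‖ω‖ * (‖ω‖*(C*a))^(2*j+1) := by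
      have hXb : ‖Xtilde w (2*j+1) x‖ ≤ (C*a)^(2*j+1) := by
        refine le_trans hb (pow_le_pow_left₀ (mul_nonneg hC0 hx.1) ?_ _)
        nlinarith [hx.2]
      calc ‖ω‖^(2*j+2) * ‖Xtilde w (2*j+1) x‖ ≤ ‖ω‖^(2*j+2) * (C*a)^(2*j+1) := by
            apply mul_le_mul_of_nonneg_left hXb (by positivity)
        _ = ‖ω‖ * (‖ω‖*(C*a))^(2*j+1) := by rw [mul_pow, pow_succ]; ring
    have h4 : (1/4:ℝ)^j = ((4:ℝ)^j)⁻¹ := by rw [one_div, inv_pow]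
    calc ‖ω‖^(2*j+2) * ‖Xtilde w (2*j+1) x‖ / (((2*j+1).factorial : ℕ) : ℝ)
        ≤ (‖ω‖ * (‖ω‖*(C*a))^(2*j+1)) / (((2*j+1).factorial : ℕ) : ℝ) := by gcongr
      _ = ‖ω‖ * ((‖ω‖*(C*a))^(2*j+1) / (((2*j+1).factorial : ℕ) : ℝ)) := by ring
      _ ≤ ‖ω‖ * (Real.exp (2*(‖ω‖*(C*a))) / 2^(2*j+1)) := by
          have := pow_div_factorial_le (t := ‖ω‖*(C*a)) (by positivity) (2*j+1)
          gcongr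
      _ = (2*‖ω‖*Real.exp (2*(‖ω‖*(C*a)))) * (1/4:ℝ)^(j+1) := by
          have hpow : (2:ℝ)^(2*j+1) = 2 * 4^j := by
            rw [pow_succ, pow_mul]; norm_num; ring
          rw [hpow, pow_succ, h4]
          have h4j : (0:ℝ) < (4:ℝ)^j := by positivity
          field_simp
          ring

lemma t1dd_eq (j : ℕ) (x : ℝ) :
    t1dd w ω (j+1) x = ω^2 * w x * t1 w ω j x := by
  simp only [t1dd, t1]
  have h := fact_ne (2*j)
  field_simp
  ring

lemma t2dd_eq (j : ℕ) (x : ℝ) :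
    t2dd w ω (j+1) x = ω^2 * w x * t2 w ω j x := by
  simp only [t2dd, t2]
  have h := fact_ne (2*j+1)
  field_simp
  ring

lemma bt1dd (hw : Continuous w) (hC : ∀ x, ‖w x‖ ≤ C) (hC1 : 1 ≤ C) (ha : 0 < a)
    (k : ℕ) {x : ℝ} (hx : x ∈ Set.Icc 0 a) :
    ‖t1dd w ω k x‖ ≤ (4*‖ω‖^2*C*Real.exp (2*(‖ω‖*(C*a)))) * (1/4:ℝ)^k := by
  have hC0 : (0:ℝ) ≤ C := le_trans zero_le_one hC1
  cases k with
  | zero => simp [t1dd]; positivity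
  | succ j =>
    rw [t1dd_eq]
    calc ‖ω^2 * w x * t1 w ω j x‖ = ‖ω‖^2 * ‖w x‖ * ‖t1 w ω j x‖ := by
          simp [norm_mul, norm_pow]
      _ ≤ ‖ω‖^2 * C * (Real.exp (2*(‖ω‖*(C*a))) * (1/4:ℝ)^j) := by
          apply mul_le_mul (mul_le_mul_of_nonneg_left (hC x) (by positivity))
            (bt1 hw hC hC1 ha j hx) (norm_nonneg _) (by positivity)
      _ = (4*‖ω‖^2*C*Real.exp (2*(‖ω‖*(C*a)))) * (1/4:ℝ)^(j+1) := by
          rw [pow_succ]; ring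

lemma bt2dd (hw : Continuous w) (hC : ∀ x, ‖w x‖ ≤ C) (hC1 : 1 ≤ C) (ha : 0 < a)
    (k : ℕ) {x : ℝ} (hx : x ∈ Set.Icc 0 a) :
    ‖t2dd w ω k x‖ ≤ (4*‖ω‖^2*C*((C*a) * Real.exp (2*(‖ω‖*(C*a))))) * (1/4:ℝ)^k := by
  have hC0 : (0:ℝ) ≤ C := le_trans zero_le_one hC1
  cases k with
  | zero => simp [t2dd]; positivity
  | succ j =>
    rw [t2dd_eq]
    calc ‖ω^2 * w x * t2 w ω j x‖ = ‖ω‖^2 * ‖w x‖ * ‖t2 w ω j x‖ := by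
          simp [norm_mul, norm_pow]
      _ ≤ ‖ω‖^2 * C * (((C*a) * Real.exp (2*(‖ω‖*(C*a)))) * (1/4:ℝ)^j) := by
          apply mul_le_mul (mul_le_mul_of_nonneg_left (hC x) (by positivity))
            (bt2 hw hC hC1 ha j hx) (norm_nonneg _) (by positivity)
      _ = (4*‖ω‖^2*C*((C*a) * Real.exp (2*(‖ω‖*(C*a))))) * (1/4:ℝ)^(j+1) := by
          rw [pow_succ]; ring

end SPPS5B

namespace SPPS6
open SPPS SPPS2 SPPS3 SPPS4 SPPS5 SPPS5B
variable {w : ℝ → ℂ} {C : ℝ} {ω : ℂ} {a : ℝ}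

lemma t1_cont (hw : Continuous w) (k : ℕ) : Continuous (fun x => t1 w ω k x) := by
  simp only [t1]; exact (continuous_const.mul (Xtilde_cont hw _)).div_const _

lemma t2_cont (hw : Continuous w) (k : ℕ) : Continuous (fun x => t2 w ω k x) := by
  simp only [t2]; exact (continuous_const.mul (Xup_cont hw _)).div_const _

lemma t1d_cont (hw : Continuous w) (k : ℕ) : Continuous (fun x => t1d w ω k x) := by
  cases k with
  | zero => simp only [t1d]; exact continuous_const
  | succ j => simp only [t1d]; exact (continuous_const.mul (Xtilde_cont hw _)).div_const _

lemma t2d_cont (hw : Continuous w) (k : ℕ) : Continuous (fun x => t2d w ω k x) := by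
  simp only [t2d]; exact (continuous_const.mul (Xup_cont hw _)).div_const _

section hyp
variable (hw : Continuous w) (hC : ∀ x, ‖w x‖ ≤ C) (hC1 : 1 ≤ C) (ha : 0 < a)
include hw hC hC1 ha

lemma summ_t1 {x : ℝ} (hx : x ∈ Set.Icc 0 a) : Summable (fun k => t1 w ω k x) :=
  Summable.of_norm_bounded (geo_sum _) (fun k => bt1 hw hC hC1 ha k hx)

lemma summ_t2 {x : ℝ} (hx : x ∈ Set.Icc 0 a) : Summable (fun k => t2 w ω k x) :=
  Summable.of_norm_bounded (geo_sum _) (fun k => bt2 hw hC hC1 ha k hx)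

lemma summ_t1d {x : ℝ} (hx : x ∈ Set.Icc 0 a) : Summable (fun k => t1d w ω k x) :=
  Summable.of_norm_bounded (geo_sum _) (fun k => bt1d hw hC hC1 ha k hx)

lemma summ_t2d {x : ℝ} (hx : x ∈ Set.Icc 0 a) : Summable (fun k => t2d w ω k x) :=
  Summable.of_norm_bounded (geo_sum _) (fun k => bt2d hw hC hC1 ha k hx)

lemma summ_t1dd {x : ℝ} (hx : x ∈ Set.Icc 0 a) : Summable (fun k => t1dd w ω k x) :=
  Summable.of_norm_bounded (geo_sum _) (fun k => bt1dd hw hC hC1 ha k hx)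

lemma summ_t2dd {x : ℝ} (hx : x ∈ Set.Icc 0 a) : Summable (fun k => t2dd w ω k x) :=
  Summable.of_norm_bounded (geo_sum _) (fun k => bt2dd hw hC hC1 ha k hx)

lemma uc1 : TendstoUniformlyOn (fun N x => ∑ k ∈ Finset.range N, t1 w ω k x)
    (U₁ w ω) Filter.atTop (Set.Icc 0 a) :=
  tendstoUniformlyOn_tsum_nat (geo_sum _) (fun k x hx => bt1 hw hC hC1 ha k hx)

lemma uc2 : TendstoUniformlyOn (fun N x => ∑ k ∈ Finset.range N, t2 w ω k x)
    (U₂ w ω) Filter.atTop (Set.Icc 0 a) :=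
  tendstoUniformlyOn_tsum_nat (geo_sum _) (fun k x hx => bt2 hw hC hC1 ha k hx)

lemma uc1d : TendstoUniformlyOn (fun N x => ∑ k ∈ Finset.range N, t1d w ω k x)
    (V1 w ω) Filter.atTop (Set.Icc 0 a) :=
  tendstoUniformlyOn_tsum_nat (geo_sum _) (fun k x hx => bt1d hw hC hC1 ha k hx)

lemma uc2d : TendstoUniformlyOn (fun N x => ∑ k ∈ Finset.range N, t2d w ω k x)
    (V2 w ω) Filter.atTop (Set.Icc 0 a) :=
  tendstoUniformlyOn_tsum_nat (geo_sum _) (fun k x hx => bt2d hw hC hC1 ha k hx)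

lemma tsum_t1dd_eq {x : ℝ} (hx : x ∈ Set.Icc 0 a) :
    ∑' k, t1dd w ω k x = ω^2 * w x * U₁ w ω x := by
  have h0 : t1dd w ω 0 x = 0 := rfl
  calc ∑' k, t1dd w ω k x = t1dd w ω 0 x + ∑' j, t1dd w ω (j+1) x :=
        Summable.tsum_eq_zero_add (summ_t1dd hw hC hC1 ha hx)
    _ = ∑' j, ω^2 * w x * t1 w ω j x := by
        rw [h0, zero_add]; exact tsum_congr (fun j => t1dd_eq j x)
    _ = ω^2 * w x * ∑' j, t1 w ω j x := tsum_mul_left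
    _ = ω^2 * w x * U₁ w ω x := rfl

lemma tsum_t2dd_eq {x : ℝ} (hx : x ∈ Set.Icc 0 a) :
    ∑' k, t2dd w ω k x = ω^2 * w x * U₂ w ω x := by
  have h0 : t2dd w ω 0 x = 0 := rfl
  calc ∑' k, t2dd w ω k x = t2dd w ω 0 x + ∑' j, t2dd w ω (j+1) x :=
        Summable.tsum_eq_zero_add (summ_t2dd hw hC hC1 ha hx)
    _ = ∑' j, ω^2 * w x * t2 w ω j x := by
        rw [h0, zero_add]; exact tsum_congr (fun j => t2dd_eq j x)
    _ = ω^2 * w x * ∑' j, t2 w ω j x := tsum_mul_left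
    _ = ω^2 * w x * U₂ w ω x := rfl

lemma uc1dd : TendstoUniformlyOn (fun N x => ∑ k ∈ Finset.range N, t1dd w ω k x)
    (fun x => ω^2 * w x * U₁ w ω x) Filter.atTop (Set.Icc 0 a) :=
  (tendstoUniformlyOn_tsum_nat (geo_sum _) (fun k x hx => bt1dd hw hC hC1 ha k hx)).congr_right
    (fun x hx => tsum_t1dd_eq hw hC hC1 ha hx)

lemma uc2dd : TendstoUniformlyOn (fun N x => ∑ k ∈ Finset.range N, t2dd w ω k x)
    (fun x => ω^2 * w x * U₂ w ω x) Filter.atTop (Set.Icc 0 a) :=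
  (tendstoUniformlyOn_tsum_nat (geo_sum _) (fun k x hx => bt2dd hw hC hC1 ha k hx)).congr_right
    (fun x hx => tsum_t2dd_eq hw hC hC1 ha hx)

lemma hasDerivAt_U1 {x : ℝ} (hx : x ∈ Set.Ioo 0 a) :
    HasDerivAt (U₁ w ω) (V1 w ω x) x := by
  apply hasDerivAt_of_tendstoUniformlyOn (f := fun N x => ∑ k ∈ Finset.range N, t1 w ω k x)
    isOpen_Ioo ((uc1d hw hC hC1 ha).mono Set.Ioo_subset_Icc_self)
    (Filter.Eventually.of_forall (fun N y _ =>
      HasDerivAt.fun_sum (fun k _ => t1_hasDerivAt hw k y)))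
    (fun y hy => (summ_t1 hw hC hC1 ha (Set.Ioo_subset_Icc_self hy)).hasSum.tendsto_sum_nat)
    hx

lemma hasDerivAt_U2 {x : ℝ} (hx : x ∈ Set.Ioo 0 a) :
    HasDerivAt (U₂ w ω) (V2 w ω x) x := by
  apply hasDerivAt_of_tendstoUniformlyOn (f := fun N x => ∑ k ∈ Finset.range N, t2 w ω k x)
    isOpen_Ioo ((uc2d hw hC hC1 ha).mono Set.Ioo_subset_Icc_self)
    (Filter.Eventually.of_forall (fun N y _ =>
      HasDerivAt.fun_sum (fun k _ => t2_hasDerivAt hw k y)))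
    (fun y hy => (summ_t2 hw hC hC1 ha (Set.Ioo_subset_Icc_self hy)).hasSum.tendsto_sum_nat)
    hx

lemma hasDerivAt_V1 {x : ℝ} (hx : x ∈ Set.Ioo 0 a) :
    HasDerivAt (V1 w ω) (ω^2 * w x * U₁ w ω x) x := by
  apply hasDerivAt_of_tendstoUniformlyOn (f := fun N x => ∑ k ∈ Finset.range N, t1d w ω k x)
    isOpen_Ioo ((uc1dd hw hC hC1 ha).mono Set.Ioo_subset_Icc_self)
    (Filter.Eventually.of_forall (fun N y _ =>
      HasDerivAt.fun_sum (fun k _ => t1d_hasDerivAt hw k y)))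
    (fun y hy => (summ_t1d hw hC hC1 ha (Set.Ioo_subset_Icc_self hy)).hasSum.tendsto_sum_nat)
    hx

lemma hasDerivAt_V2 {x : ℝ} (hx : x ∈ Set.Ioo 0 a) :
    HasDerivAt (V2 w ω) (ω^2 * w x * U₂ w ω x) x := by
  apply hasDerivAt_of_tendstoUniformlyOn (f := fun N x => ∑ k ∈ Finset.range N, t2d w ω k x)
    isOpen_Ioo ((uc2dd hw hC hC1 ha).mono Set.Ioo_subset_Icc_self)
    (Filter.Eventually.of_forall (fun N y _ =>
      HasDerivAt.fun_sum (fun k _ => t2d_hasDerivAt hw k y)))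
    (fun y hy => (summ_t2d hw hC hC1 ha (Set.Ioo_subset_Icc_self hy)).hasSum.tendsto_sum_nat)
    hx

lemma cont_U1 : ContinuousOn (U₁ w ω) (Set.Icc 0 a) :=
  (uc1 hw hC hC1 ha).continuousOn (Filter.Eventually.of_forall (fun N =>
    (continuous_finset_sum _ (fun k _ => t1_cont hw k)).continuousOn)).frequently

lemma cont_U2 : ContinuousOn (U₂ w ω) (Set.Icc 0 a) :=
  (uc2 hw hC hC1 ha).continuousOn (Filter.Eventually.of_forall (fun N =>
    (continuous_finset_sum _ (fun k _ => t2_cont hw k)).continuousOn)).frequently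

lemma cont_V1 : ContinuousOn (V1 w ω) (Set.Icc 0 a) :=
  (uc1d hw hC hC1 ha).continuousOn (Filter.Eventually.of_forall (fun N =>
    (continuous_finset_sum _ (fun k _ => t1d_cont hw k)).continuousOn)).frequently

lemma cont_V2 : ContinuousOn (V2 w ω) (Set.Icc 0 a) :=
  (uc2d hw hC hC1 ha).continuousOn (Filter.Eventually.of_forall (fun N =>
    (continuous_finset_sum _ (fun k _ => t2d_cont hw k)).continuousOn)).frequently

end hyp

lemma U1_zero : U₁ w ω 0 = 1 := by
  have h : ∀ k : ℕ, k ≠ 0 → t1 w ω k 0 = 0 := by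
    intro k hk
    obtain ⟨j, rfl⟩ := Nat.exists_eq_succ_of_ne_zero hk
    have hidx : 2*(j+1) = 2*j+1+1 := by ring
    simp [t1, hidx, Xtilde_zero]
  have : ∑' k, t1 w ω k 0 = t1 w ω 0 0 := tsum_eq_single (f := fun k => t1 w ω k 0) 0 h
  calc U₁ w ω 0 = ∑' k, t1 w ω k 0 := rfl
    _ = t1 w ω 0 0 := this
    _ = 1 := by simp [t1, Xtilde]

lemma V1_zero : V1 w ω 0 = 0 := by
  have h : ∀ k : ℕ, t1d w ω k 0 = 0 := by
    intro k
    cases k with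
    | zero => rfl
    | succ j => simp [t1d, Xtilde_zero]
  calc V1 w ω 0 = ∑' k, t1d w ω k 0 := rfl
    _ = 0 := by rw [tsum_congr h]; exact tsum_zero

lemma U2_zero : U₂ w ω 0 = 0 := by
  have h : ∀ k : ℕ, t2 w ω k 0 = 0 := by
    intro k; simp [t2, Xup_zero]
  calc U₂ w ω 0 = ∑' k, t2 w ω k 0 := rfl
    _ = 0 := by rw [tsum_congr h]; exact tsum_zero

lemma V2_zero : V2 w ω 0 = 1 := by
  have h : ∀ k : ℕ, k ≠ 0 → t2d w ω k 0 = 0 := by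
    intro k hk
    obtain ⟨j, rfl⟩ := Nat.exists_eq_succ_of_ne_zero hk
    have hidx : 2*(j+1) = 2*j+1+1 := by ring
    simp [t2d, hidx, Xup_zero]
  have : ∑' k, t2d w ω k 0 = t2d w ω 0 0 := tsum_eq_single (f := fun k => t2d w ω k 0) 0 h
  calc V2 w ω 0 = ∑' k, t2d w ω k 0 := rfl
    _ = t2d w ω 0 0 := this
    _ = 1 := by simp [t2d, Xup]

lemma wron (hw : Continuous w) (hC : ∀ x, ‖w x‖ ≤ C) (hC1 : 1 ≤ C) (ha : 0 < a)
    {x : ℝ} (hx : x ∈ Set.Ioo 0 a) :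
    U₁ w ω x * V2 w ω x - V1 w ω x * U₂ w ω x = 1 := by
  set Wr : ℝ → ℂ := fun y => U₁ w ω y * V2 w ω y - V1 w ω y * U₂ w ω y with hWr
  have hW : ∀ y ∈ Set.Ioo 0 a, HasDerivAt Wr 0 y := by
    intro y hy
    have h1 := hasDerivAt_U1 (ω := ω) hw hC hC1 ha hy
    have h2 := hasDerivAt_V1 (ω := ω) hw hC hC1 ha hy
    have h3 := hasDerivAt_U2 (ω := ω) hw hC hC1 ha hy
    have h4 := hasDerivAt_V2 (ω := ω) hw hC hC1 ha hy
    have := (h1.fun_mul h4).fun_sub (h2.fun_mul h3)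
    refine this.congr_deriv ?_
    ring
  have hcont : ContinuousOn Wr (Set.Icc 0 a) :=
    ((cont_U1 hw hC hC1 ha).mul (cont_V2 hw hC hC1 ha)).sub
      ((cont_V1 hw hC hC1 ha).mul (cont_U2 hw hC hC1 ha))
  have step : ∀ y ∈ Set.Ioc 0 x, Wr x = Wr y := by
    intro y hy
    have hsub : Set.Icc y x ⊆ Set.Icc 0 a :=
      Set.Icc_subset_Icc hy.1.le hx.2.le
    have := constant_of_has_deriv_right_zero (f := Wr) (hcont.mono hsub)
      (fun z hz => (hW z ⟨lt_of_lt_of_le hy.1 hz.1, lt_trans hz.2 hx.2⟩).hasDerivWithinAt)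
    exact this x ⟨hy.2, le_rfl⟩
  have hseq : Filter.Tendsto (fun n : ℕ => x / (n+1 : ℝ)) Filter.atTop (nhds 0) := by
    have := tendsto_one_div_add_atTop_nhds_zero_nat.const_mul x
    simpa [div_eq_mul_inv, one_div] using this
  have hmem : ∀ n : ℕ, x / (n+1 : ℝ) ∈ Set.Ioc 0 x := by
    intro n
    have hx0 : 0 < x := hx.1
    have hn : (0:ℝ) < (n+1 : ℝ) := by positivity
    constructor
    · positivity
    · rw [div_le_iff₀ hn]
      nlinarith
  have hmemIcc : ∀ n : ℕ, x / (n+1 : ℝ) ∈ Set.Icc 0 a := by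
    intro n
    exact ⟨(hmem n).1.le, le_trans (hmem n).2 hx.2.le⟩
  have h1 : Filter.Tendsto (fun n : ℕ => Wr (x / (n+1 : ℝ))) Filter.atTop (nhds (Wr 0)) :=
    ((hcont.continuousWithinAt ⟨le_rfl, ha.le⟩).tendsto).comp
      (tendsto_nhdsWithin_of_tendsto_nhds_of_eventually_within _ hseq
        (Filter.Eventually.of_forall hmemIcc))
  have h2 : (fun n : ℕ => Wr (x / (n+1 : ℝ))) = fun _ => Wr x :=
    funext (fun n => (step _ (hmem n)).symm)
  rw [h2] at h1
  have h3 : Wr x = Wr 0 := (tendsto_nhds_unique h1 tendsto_const_nhds).symm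
  have h4 : Wr 0 = 1 := by
    simp only [hWr, U1_zero, V1_zero, U2_zero, V2_zero]
    ring
  calc U₁ w ω x * V2 w ω x - V1 w ω x * U₂ w ω x = Wr x := rfl
    _ = Wr 0 := h3
    _ = 1 := h4

end SPPS6

namespace SPPS7
open SPPS SPPS2 SPPS3 SPPS4 SPPS5 SPPS5B SPPS6

variable {a : ℝ} {ω : ℂ}

lemma Xtilde_congr {q w : ℝ → ℂ} (heq : Set.EqOn q w (Set.Icc 0 a)) :
    ∀ n, ∀ x ∈ Set.Icc 0 a, Xtilde q n x = Xtilde w n x := by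
  intro n
  induction n with
  | zero => intro x _; rfl
  | succ n ih =>
    intro x hx
    simp only [Xtilde]
    congr 1
    apply intervalIntegral.integral_congr
    intro ξ hξ
    rw [Set.uIcc_of_le hx.1] at hξ
    have hmem : ξ ∈ Set.Icc 0 a := ⟨hξ.1, le_trans hξ.2 hx.2⟩
    simp only
    rw [ih ξ hmem]
    by_cases h : Even (n+1) <;> simp [h, heq hmem]

lemma Xup_congr {q w : ℝ → ℂ} (heq : Set.EqOn q w (Set.Icc 0 a)) :
    ∀ n, ∀ x ∈ Set.Icc 0 a, Xup q n x = Xup w n x := by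
  intro n
  induction n with
  | zero => intro x _; rfl
  | succ n ih =>
    intro x hx
    simp only [Xup]
    congr 1
    apply intervalIntegral.integral_congr
    intro ξ hξ
    rw [Set.uIcc_of_le hx.1] at hξ
    have hmem : ξ ∈ Set.Icc 0 a := ⟨hξ.1, le_trans hξ.2 hx.2⟩
    simp only
    rw [ih ξ hmem]
    by_cases h : Even (n+1) <;> simp [h, heq hmem]

lemma U1_congr {q w : ℝ → ℂ} (heq : Set.EqOn q w (Set.Icc 0 a)) {x : ℝ}
    (hx : x ∈ Set.Icc 0 a) : U₁ q ω x = U₁ w ω x := by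
  unfold U₁
  exact tsum_congr fun k => by rw [Xtilde_congr heq (2*k) x hx]

lemma U2_congr {q w : ℝ → ℂ} (heq : Set.EqOn q w (Set.Icc 0 a)) {x : ℝ}
    (hx : x ∈ Set.Icc 0 a) : U₂ q ω x = U₂ w ω x := by
  unfold U₂
  exact tsum_congr fun k => by rw [Xup_congr heq (2*k+1) x hx]

end SPPS7


open SPPS SPPS2 SPPS3 SPPS4 SPPS5 SPPS5B SPPS6 SPPS7 in
/-- for every ω ∈ ℂ, the general solution of −u'' + ω² q u = 0 on (0,a)
is u = c₁ Σ_{even n} ω^n X̃^(n)/n! + c₂ Σ_{odd n} ω^{n-1} X^(n)/n!: both series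
converge uniformly on [0,a], every such combination solves the equation on (0,a),
and every twice differentiable solution on (0,a) is of this form. -/
theorem stmt_12 (a : ℝ) (ha : 0 < a) (q : ℝ → ℂ) (hq : ContinuousOn q (Set.Icc 0 a))
    (ω : ℂ) :
    TendstoUniformlyOn
      (fun N x => ∑ k ∈ Finset.range N,
        ω ^ (2 * k) * Xtilde q (2 * k) x / (Nat.factorial (2 * k) : ℂ))
      (U₁ q ω) Filter.atTop (Set.Icc 0 a) ∧
    TendstoUniformlyOn
      (fun N x => ∑ k ∈ Finset.range N,
        ω ^ (2 * k) * Xup q (2 * k + 1) x / (Nat.factorial (2 * k + 1) : ℂ))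
      (U₂ q ω) Filter.atTop (Set.Icc 0 a) ∧
    (∀ c₁ c₂ : ℂ, ∀ x ∈ Set.Ioo 0 a,
      -(deriv (deriv (fun y => c₁ * U₁ q ω y + c₂ * U₂ q ω y)) x) +
        ω ^ 2 * q x * (c₁ * U₁ q ω x + c₂ * U₂ q ω x) = 0) ∧
    ∀ u : ℝ → ℂ,
      (∀ x ∈ Set.Ioo 0 a, DifferentiableAt ℝ u x ∧ DifferentiableAt ℝ (deriv u) x) →
      (∀ x ∈ Set.Ioo 0 a, -(deriv (deriv u) x) + ω ^ 2 * q x * u x = 0) →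
      ∃ c₁ c₂ : ℂ, ∀ x ∈ Set.Ioo 0 a, u x = c₁ * U₁ q ω x + c₂ * U₂ q ω x := by
  classical
  -- continuous bounded extension of q
  set qc : ℝ → ℂ := fun x => q ((Set.projIcc 0 a ha.le x : Set.Icc (0:ℝ) a) : ℝ) with hqc_def
  have hqeq : Set.EqOn qc q (Set.Icc 0 a) := by
    intro x hx
    simp [hqc_def, Set.projIcc_of_mem ha.le hx]
  have hqeq' : Set.EqOn q qc (Set.Icc 0 a) := fun x hx => (hqeq hx).symm
  have hqc_cont : Continuous qc := by
    apply hq.comp_continuous (continuous_subtype_val.comp continuous_projIcc)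
    intro x
    exact (Set.projIcc 0 a ha.le x).2
  obtain ⟨C₀, hC₀⟩ := isCompact_Icc.exists_bound_of_continuousOn hq
  set C : ℝ := max C₀ 1 with hC_def
  have hC1 : (1:ℝ) ≤ C := le_max_right _ _
  have hC : ∀ x, ‖qc x‖ ≤ C := fun x =>
    le_trans (hC₀ _ (Set.projIcc 0 a ha.le x).2) (le_max_left _ _)
  have hU1e : ∀ x ∈ Set.Icc 0 a, U₁ qc ω x = U₁ q ω x := fun x hx => U1_congr hqeq hx
  have hU2e : ∀ x ∈ Set.Icc 0 a, U₂ qc ω x = U₂ q ω x := fun x hx => U2_congr hqeq hx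
  -- combination derivative facts for qc
  have hP : ∀ c₁ c₂ : ℂ, ∀ y ∈ Set.Ioo 0 a,
      HasDerivAt (fun z => c₁ * U₁ qc ω z + c₂ * U₂ qc ω z)
        (c₁ * V1 qc ω y + c₂ * V2 qc ω y) y := fun c₁ c₂ y hy =>
    ((hasDerivAt_U1 hqc_cont hC hC1 ha hy).const_mul c₁).add
      ((hasDerivAt_U2 hqc_cont hC hC1 ha hy).const_mul c₂)
  have hP' : ∀ c₁ c₂ : ℂ, ∀ y ∈ Set.Ioo 0 a,
      HasDerivAt (fun z => c₁ * V1 qc ω z + c₂ * V2 qc ω z)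
        (ω^2 * qc y * (c₁ * U₁ qc ω y + c₂ * U₂ qc ω y)) y := by
    intro c₁ c₂ y hy
    have := ((hasDerivAt_V1 (ω := ω) hqc_cont hC hC1 ha hy).const_mul c₁).fun_add
      ((hasDerivAt_V2 (ω := ω) hqc_cont hC hC1 ha hy).const_mul c₂)
    refine this.congr_deriv ?_
    ring
  refine ⟨?_, ?_, ?_, ?_⟩
  · -- uniform convergence of u₁ series
    have h := uc1 (w := qc) (ω := ω) hqc_cont hC hC1 ha
    have h2 := h.congr (F' := fun N x => ∑ k ∈ Finset.range N,
        ω ^ (2 * k) * Xtilde q (2 * k) x / (Nat.factorial (2 * k) : ℂ))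
      (Filter.Eventually.of_forall (fun N x hx => Finset.sum_congr rfl (fun k _ => by
        show t1 qc ω k x = _
        simp only [t1]
        rw [Xtilde_congr hqeq (2*k) x hx])))
    exact h2.congr_right (fun x hx => hU1e x hx)
  · have h := uc2 (w := qc) (ω := ω) hqc_cont hC hC1 ha
    have h2 := h.congr (F' := fun N x => ∑ k ∈ Finset.range N,
        ω ^ (2 * k) * Xup q (2 * k + 1) x / (Nat.factorial (2 * k + 1) : ℂ))
      (Filter.Eventually.of_forall (fun N x hx => Finset.sum_congr rfl (fun k _ => by
        show t2 qc ω k x = _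
        simp only [t2]
        rw [Xup_congr hqeq (2*k+1) x hx])))
    exact h2.congr_right (fun x hx => hU2e x hx)
  · -- every combination is a solution
    intro c₁ c₂ x hx
    have hIoo_nhds : ∀ y ∈ Set.Ioo 0 a, Set.Ioo 0 a ∈ nhds y :=
      fun y hy => isOpen_Ioo.mem_nhds hy
    have hd1 : ∀ y ∈ Set.Ioo 0 a, deriv (fun z => c₁ * U₁ q ω z + c₂ * U₂ q ω z) y
        = c₁ * V1 qc ω y + c₂ * V2 qc ω y := by
      intro y hy
      have e : (fun z => c₁ * U₁ q ω z + c₂ * U₂ q ω z)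
          =ᶠ[nhds y] (fun z => c₁ * U₁ qc ω z + c₂ * U₂ qc ω z) := by
        refine Filter.eventually_of_mem (hIoo_nhds y hy) (fun z hz => ?_)
        have h1 := hU1e z (Set.Ioo_subset_Icc_self hz)
        have h2 := hU2e z (Set.Ioo_subset_Icc_self hz)
        simp only
        rw [← h1, ← h2]
      rw [e.deriv_eq, (hP c₁ c₂ y hy).deriv]
    have hd2 : deriv (deriv (fun z => c₁ * U₁ q ω z + c₂ * U₂ q ω z)) x
        = ω^2 * qc x * (c₁ * U₁ qc ω x + c₂ * U₂ qc ω x) := by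
      have e2 : deriv (fun z => c₁ * U₁ q ω z + c₂ * U₂ q ω z)
          =ᶠ[nhds x] (fun z => c₁ * V1 qc ω z + c₂ * V2 qc ω z) :=
        Filter.eventually_of_mem (hIoo_nhds x hx) (fun y hy => hd1 y hy)
      rw [e2.deriv_eq, (hP' c₁ c₂ x hx).deriv]
    rw [hd2, hU1e x (Set.Ioo_subset_Icc_self hx), hU2e x (Set.Ioo_subset_Icc_self hx),
      hqeq (Set.Ioo_subset_Icc_self hx)]
    ring
  · -- uniqueness
    intro u hu1 hu2
    set x₀ : ℝ := a/2 with hx₀_def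
    have hx₀ : x₀ ∈ Set.Ioo 0 a := ⟨by simp [hx₀_def]; linarith, by simp [hx₀_def]; linarith⟩
    set c₁ : ℂ := u x₀ * V2 qc ω x₀ - deriv u x₀ * U₂ qc ω x₀ with hc₁_def
    set c₂ : ℂ := deriv u x₀ * U₁ qc ω x₀ - u x₀ * V1 qc ω x₀ with hc₂_def
    refine ⟨c₁, c₂, ?_⟩
    set g : ℝ → ℂ := fun z => u z - (c₁ * U₁ qc ω z + c₂ * U₂ qc ω z) with hg_def
    set dg : ℝ → ℂ := fun z => deriv u z - (c₁ * V1 qc ω z + c₂ * V2 qc ω z) with hdg_def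
    have hdgD : ∀ y ∈ Set.Ioo 0 a, HasDerivAt g (dg y) y := fun y hy =>
      ((hu1 y hy).1.hasDerivAt).sub (hP c₁ c₂ y hy)
    have hderiv2 : ∀ y ∈ Set.Ioo 0 a, deriv (deriv u) y = ω^2 * qc y * u y := by
      intro y hy
      have hD := hu2 y hy
      have hqy : q y = qc y := hqeq' (Set.Ioo_subset_Icc_self hy)
      rw [hqy] at hD
      linear_combination -hD
    have hddg : ∀ y ∈ Set.Ioo 0 a, HasDerivAt dg (ω^2 * qc y * g y) y := by
      intro y hy
      have h1 : HasDerivAt (deriv u) (deriv (deriv u) y) y := (hu1 y hy).2.hasDerivAt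
      rw [hderiv2 y hy] at h1
      have := h1.fun_sub (hP' c₁ c₂ y hy)
      refine this.congr_deriv ?_
      simp only [hg_def]
      ring
    -- the ODE vector field
    set v : ℝ → ℂ × ℂ → ℂ × ℂ := fun t p => (p.2, ω^2 * qc t * p.1) with hv_def
    set K : NNReal := Real.toNNReal (1 + ‖ω‖^2 * C) with hK_def
    have hKc : (K : ℝ) = 1 + ‖ω‖^2 * C := by
      rw [hK_def, Real.coe_toNNReal]
      positivity
    have hlip : ∀ t, LipschitzWith K (v t) := by
      intro t
      refine LipschitzWith.of_dist_le_mul (fun p p' => ?_)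
      rw [Prod.dist_eq]
      have hd1' : dist (v t p).1 (v t p').1 ≤ (K:ℝ) * dist p p' := by
        have h1 : dist (v t p).1 (v t p').1 = dist p.2 p'.2 := rfl
        have h2 : dist p.2 p'.2 ≤ dist p p' := by
          rw [Prod.dist_eq]; exact le_max_right _ _
        have hK1 : (1:ℝ) ≤ (K:ℝ) := by rw [hKc]; nlinarith [norm_nonneg ω, le_trans zero_le_one hC1]
        rw [h1]
        nlinarith [dist_nonneg (x := p) (y := p')]
      have hd2' : dist (v t p).2 (v t p').2 ≤ (K:ℝ) * dist p p' := by
        have h1 : dist (v t p).2 (v t p').2 = ‖ω^2 * qc t‖ * dist p.1 p'.1 := by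
          simp only [hv_def, dist_eq_norm, ← mul_sub, norm_mul]
        have h2 : ‖ω^2 * qc t‖ ≤ ‖ω‖^2 * C := by
          rw [norm_mul, norm_pow]
          exact mul_le_mul_of_nonneg_left (hC t) (by positivity)
        have h3 : dist p.1 p'.1 ≤ dist p p' := by
          rw [Prod.dist_eq]; exact le_max_left _ _
        have h4 : ‖ω^2 * qc t‖ * dist p.1 p'.1 ≤ (‖ω‖^2 * C) * dist p p' := by
          apply mul_le_mul h2 h3 dist_nonneg (by positivity)
        rw [h1]
        refine le_trans h4 ?_
        rw [hKc]
        nlinarith [dist_nonneg (x := p) (y := p')]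
      exact max_le hd1' hd2'
    set F : ℝ → ℂ × ℂ := fun y => (g y, dg y) with hF_def
    have hFd : ∀ t ∈ Set.Ioo 0 a, HasDerivAt F (v t (F t)) t ∧ F t ∈ (Set.univ : Set (ℂ × ℂ)) :=
      fun t ht => ⟨(hdgD t ht).prodMk (hddg t ht), trivial⟩
    have hZd : ∀ t ∈ Set.Ioo 0 a,
        HasDerivAt (fun _ : ℝ => ((0:ℂ), (0:ℂ))) (v t ((0:ℂ),(0:ℂ))) t ∧
          ((0:ℂ),(0:ℂ)) ∈ (Set.univ : Set (ℂ × ℂ)) := by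
      intro t ht
      refine ⟨?_, trivial⟩
      have hz : v t ((0:ℂ),(0:ℂ)) = ((0:ℂ),(0:ℂ)) := by simp [hv_def]
      rw [hz]
      exact hasDerivAt_const _ _
    have hW := wron (ω := ω) hqc_cont hC hC1 ha hx₀
    have hgx₀ : g x₀ = 0 := by
      simp only [hg_def, hc₁_def, hc₂_def]
      linear_combination (-(u x₀)) * hW
    have hdgx₀ : dg x₀ = 0 := by
      simp only [hdg_def, hc₁_def, hc₂_def]
      linear_combination (-(deriv u x₀)) * hW
    have heq0 : F x₀ = (fun _ : ℝ => ((0:ℂ),(0:ℂ))) x₀ := by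
      show (g x₀, dg x₀) = ((0:ℂ),(0:ℂ))
      rw [hgx₀, hdgx₀]
    have huniq := ODE_solution_unique_of_mem_Ioo (v := v) (s := fun _ => Set.univ) (K := K)
      (fun t _ => (hlip t).lipschitzOnWith) hx₀ hFd hZd heq0
    intro x hx
    have hFx : F x = ((0:ℂ),(0:ℂ)) := huniq hx
    have hgx : g x = 0 := congrArg Prod.fst hFx
    have : u x = c₁ * U₁ qc ω x + c₂ * U₂ qc ω x := by
      have := sub_eq_zero.mp (by simpa [hg_def] using hgx)
      exact this
    rw [this, hU1e x (Set.Ioo_subset_Icc_self hx), hU2e x (Set.Ioo_subset_Icc_self hx)]
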